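/- The number of symmetric non-crossing partial matchings satisfies S(n) = 2 S(n-2) + \sum_{i=2}^{⌊n/2⌋} M(i-2) S(n-2i) for n ≥ 2, where M is the Motzkin number sequence. -/

import Mathlib

/-- `P` is a non-crossing partial matching of the points `0, …, n-1` on a line:
pairs are listed with smaller endpoint first, all endpoints are distinct, and
no two pairs cross. -/
def IsNCMatching (n : ℕ) (P : Finset (Fin n × Fin n)) : Prop :=
  (∀ p ∈ P, p.1 < p.2) ∧
  (∀ p ∈ P, ∀ q ∈ P, p ≠ q →
    p.1 ≠ q.1 ∧ p.1 ≠ q.2 ∧ p.2 ≠ q.1 ∧ p.2 ≠ q.2) ∧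
  (∀ p ∈ P, ∀ q ∈ P, ¬(p.1 < q.1 ∧ q.1 < p.2 ∧ p.2 < q.2))

/-- The `n`-th Motzkin number: the number of non-crossing partial matchings of
`n` points on a line. -/
noncomputable def motzkin (n : ℕ) : ℕ :=
  {P : Finset (Fin n × Fin n) | IsNCMatching n P}.ncard

/-- A matching on `n` points is symmetric if it is invariant under the
reflection `k ↦ n - 1 - k` (i.e. `k ↦ n + 1 - k` in 1-based labelling). -/
def IsSymmetricMatching (n : ℕ) (P : Finset (Fin n × Fin n)) : Prop :=
  ∀ p ∈ P, (p.2.rev, p.1.rev) ∈ P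

/-- `S n`: the number of symmetric non-crossing partial matchings of `n` points. -/
noncomputable def symMatchings (n : ℕ) : ℕ :=
  {P : Finset (Fin n × Fin n) | IsNCMatching n P ∧ IsSymmetricMatching n P}.ncard

namespace NCAux

open Finset

variable {m n : ℕ}

def emb (c : ℕ) (h : c + m ≤ n) (a : Fin m) : Fin n := ⟨c + a.1, by omega⟩

def push (c : ℕ) (h : c + m ≤ n) (Q : Finset (Fin m × Fin m)) : Finset (Fin n × Fin n) :=
  Q.image fun q => (emb c h q.1, emb c h q.2)

def pull (c : ℕ) (h : c + m ≤ n) (P : Finset (Fin n × Fin n)) : Finset (Fin m × Fin m) :=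
  Finset.univ.filter fun q => (emb c h q.1, emb c h q.2) ∈ P

def reflP (P : Finset (Fin n × Fin n)) : Finset (Fin n × Fin n) :=
  P.image fun p => (p.2.rev, p.1.rev)

lemma mem_push {c : ℕ} {h : c + m ≤ n} {Q : Finset (Fin m × Fin m)} {p : Fin n × Fin n} :
    p ∈ push c h Q ↔ ∃ q ∈ Q, (p.1 : ℕ) = c + q.1 ∧ (p.2 : ℕ) = c + q.2 := by
  simp [push, Finset.mem_image, Prod.ext_iff, Fin.ext_iff, emb]
  constructor
  · rintro ⟨a, b, hab, h1, h2⟩; exact ⟨a, b, hab, h1.symm, h2.symm⟩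
  · rintro ⟨a, b, hab, h1, h2⟩; exact ⟨a, b, hab, h1.symm, h2.symm⟩

lemma mem_pull {c : ℕ} {h : c + m ≤ n} {P : Finset (Fin n × Fin n)} {q : Fin m × Fin m} :
    q ∈ pull c h P ↔ (emb c h q.1, emb c h q.2) ∈ P := by
  simp [pull]

lemma card_push {c : ℕ} {h : c + m ≤ n} {Q : Finset (Fin m × Fin m)} :
    (push c h Q).card = Q.card := by
  apply Finset.card_image_of_injective
  rintro ⟨a, b⟩ ⟨a', b'⟩ hab
  simp [Prod.ext_iff, Fin.ext_iff, emb] at hab ⊢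
  omega

lemma pull_push {c : ℕ} {h : c + m ≤ n} {Q : Finset (Fin m × Fin m)} :
    pull c h (push c h Q) = Q := by
  ext q
  simp only [mem_pull, mem_push]
  constructor
  · rintro ⟨q', hq', h1, h2⟩
    have : q = q' := by
      obtain ⟨⟨a, _⟩, ⟨b, _⟩⟩ := q; obtain ⟨⟨a', _⟩, ⟨b', _⟩⟩ := q'
      simp [emb, Prod.ext_iff, Fin.ext_iff] at h1 h2 ⊢
      omega
    rwa [this]
  · intro hq; exact ⟨q, hq, rfl, rfl⟩

lemma mem_push_pull {c : ℕ} {h : c + m ≤ n} {P : Finset (Fin n × Fin n)} {p : Fin n × Fin n} :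
    p ∈ push c h (pull c h P) ↔
      p ∈ P ∧ c ≤ (p.1 : ℕ) ∧ (p.1 : ℕ) < c + m ∧ c ≤ (p.2 : ℕ) ∧ (p.2 : ℕ) < c + m := by
  simp only [mem_push, mem_pull]
  constructor
  · rintro ⟨q, hq, h1, h2⟩
    have e1 : p.1 = emb c h q.1 := by apply Fin.ext; exact h1
    have e2 : p.2 = emb c h q.2 := by apply Fin.ext; exact h2
    refine ⟨by rw [show p = (emb c h q.1, emb c h q.2) from Prod.ext e1 e2]; exact hq, ?_⟩
    have := q.1.2; have := q.2.2
    omega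
  · rintro ⟨hp, h1, h2, h3, h4⟩
    refine ⟨(⟨(p.1 : ℕ) - c, by omega⟩, ⟨(p.2 : ℕ) - c, by omega⟩), ?_, by simp; omega, by simp; omega⟩
    have : (emb c h ⟨(p.1 : ℕ) - c, by omega⟩, emb c h ⟨(p.2 : ℕ) - c, by omega⟩) = p := by
      simp [Prod.ext_iff, Fin.ext_iff, emb]; omega
    rwa [this]

lemma push_range {c : ℕ} {h : c + m ≤ n} {Q : Finset (Fin m × Fin m)} {p : Fin n × Fin n}
    (hp : p ∈ push c h Q) :
    c ≤ (p.1 : ℕ) ∧ (p.1 : ℕ) < c + m ∧ c ≤ (p.2 : ℕ) ∧ (p.2 : ℕ) < c + m := by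
  obtain ⟨q, -, h1, h2⟩ := mem_push.1 hp
  have := q.1.2; have := q.2.2
  omega

lemma mem_reflP {P : Finset (Fin n × Fin n)} {p : Fin n × Fin n} :
    p ∈ reflP P ↔ (p.2.rev, p.1.rev) ∈ P := by
  simp only [reflP, Finset.mem_image]
  constructor
  · rintro ⟨q, hq, rfl⟩; simpa [Fin.rev_rev]
  · intro hp; exact ⟨(p.2.rev, p.1.rev), hp, by simp [Fin.rev_rev]⟩


lemma isNC_push {c : ℕ} (h : c + m ≤ n) {Q : Finset (Fin m × Fin m)}
    (hQ : IsNCMatching m Q) : IsNCMatching n (push c h Q) := by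
  obtain ⟨h1, h2, h3⟩ := hQ
  refine ⟨?_, ?_, ?_⟩
  · intro p hp
    obtain ⟨q, hq, e1, e2⟩ := mem_push.1 hp
    have := h1 q hq
    simp only [Fin.lt_def] at this ⊢
    omega
  · intro p hp q hq hne
    obtain ⟨p', hp', e1, e2⟩ := mem_push.1 hp
    obtain ⟨q', hq', f1, f2⟩ := mem_push.1 hq
    have hne' : p' ≠ q' := by
      rintro rfl
      apply hne
      obtain ⟨a,b⟩ := p; obtain ⟨a',b'⟩ := q
      simp [Prod.ext_iff, Fin.ext_iff] at *
      omega
    have := h2 p' hp' q' hq' hne'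
    simp only [Ne, Fin.ext_iff] at this ⊢
    omega
  · intro p hp q hq
    obtain ⟨p', hp', e1, e2⟩ := mem_push.1 hp
    obtain ⟨q', hq', f1, f2⟩ := mem_push.1 hq
    have := h3 p' hp' q' hq'
    simp only [Fin.lt_def] at this ⊢
    omega

lemma isNC_pull {c : ℕ} (h : c + m ≤ n) {P : Finset (Fin n × Fin n)}
    (hP : IsNCMatching n P) : IsNCMatching m (pull c h P) := by
  obtain ⟨h1, h2, h3⟩ := hP
  refine ⟨?_, ?_, ?_⟩
  · intro q hq
    have := h1 _ (mem_pull.1 hq)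
    simp only [Fin.lt_def, emb] at this ⊢
    omega
  · intro p hp q hq hne
    have hne' : (emb c h p.1, emb c h p.2) ≠ (emb c h q.1, emb c h q.2) := by
      simp only [Ne, Prod.ext_iff, Fin.ext_iff, emb] at hne ⊢
      obtain ⟨a,b⟩ := p; obtain ⟨a',b'⟩ := q
      simp [Prod.ext_iff, Fin.ext_iff] at hne ⊢
      omega
    have := h2 _ (mem_pull.1 hp) _ (mem_pull.1 hq) hne'
    simp only [Ne, Fin.ext_iff, emb] at this ⊢
    omega
  · intro p hp q hq
    have := h3 _ (mem_pull.1 hp) _ (mem_pull.1 hq)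
    simp only [Fin.lt_def, emb] at this ⊢
    omega

lemma isNC_reflP {P : Finset (Fin n × Fin n)} (hP : IsNCMatching n P) :
    IsNCMatching n (reflP P) := by
  obtain ⟨h1, h2, h3⟩ := hP
  have hn1 : ∀ a : Fin n, (a.rev : ℕ) = n - 1 - (a : ℕ) := by
    intro a; have := a.2; simp [Fin.val_rev]; omega
  refine ⟨?_, ?_, ?_⟩
  · intro p hp
    have := h1 _ (mem_reflP.1 hp)
    have b1 := p.1.2; have b2 := p.2.2
    simp only [Fin.lt_def, hn1] at this ⊢
    omega
  · intro p hp q hq hne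
    have hne' : (p.2.rev, p.1.rev) ≠ (q.2.rev, q.1.rev) := by
      simp only [Ne, Prod.ext_iff, Fin.ext_iff, hn1] at hne ⊢
      have := p.1.2; have := p.2.2; have := q.1.2; have := q.2.2
      omega
    have := h2 _ (mem_reflP.1 hp) _ (mem_reflP.1 hq) hne'
    simp only [Ne, Fin.ext_iff, hn1] at this ⊢
    have := p.1.2; have := p.2.2; have := q.1.2; have := q.2.2
    omega
  · intro p hp q hq
    have := h3 _ (mem_reflP.1 hq) _ (mem_reflP.1 hp)
    simp only [Fin.lt_def, hn1] at this ⊢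
    have := p.1.2; have := p.2.2; have := q.1.2; have := q.2.2
    omega

/-- Compatibility between two blocks: all endpoints distinct and no crossings. -/
def Compat (X Y : Finset (Fin n × Fin n)) : Prop :=
  ∀ p ∈ X, ∀ q ∈ Y,
    ((p.1 : ℕ) ≠ q.1 ∧ (p.1 : ℕ) ≠ q.2 ∧ (p.2 : ℕ) ≠ q.1 ∧ (p.2 : ℕ) ≠ q.2) ∧
    ¬((p.1 : ℕ) < q.1 ∧ (q.1 : ℕ) < p.2 ∧ (p.2 : ℕ) < q.2) ∧
    ¬((q.1 : ℕ) < p.1 ∧ (p.1 : ℕ) < q.2 ∧ (q.2 : ℕ) < p.2)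

lemma isNC_union {X Y : Finset (Fin n × Fin n)} (hX : IsNCMatching n X)
    (hY : IsNCMatching n Y) (hC : Compat X Y) : IsNCMatching n (X ∪ Y) := by
  obtain ⟨x1, x2, x3⟩ := hX
  obtain ⟨y1, y2, y3⟩ := hY
  refine ⟨?_, ?_, ?_⟩
  · intro p hp
    rcases Finset.mem_union.1 hp with hp | hp
    exacts [x1 p hp, y1 p hp]
  · intro p hp q hq hne
    rcases Finset.mem_union.1 hp with hp | hp <;> rcases Finset.mem_union.1 hq with hq | hq
    · exact x2 p hp q hq hne
    · have := (hC p hp q hq).1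
      simp only [Ne, Fin.ext_iff] at this ⊢
      omega
    · have := (hC q hq p hp).1
      simp only [Ne, Fin.ext_iff] at this ⊢
      omega
    · exact y2 p hp q hq hne
  · intro p hp q hq
    rcases Finset.mem_union.1 hp with hp | hp <;> rcases Finset.mem_union.1 hq with hq | hq
    · exact x3 p hp q hq
    · have := (hC p hp q hq).2.1
      simp only [Fin.lt_def] at this ⊢
      omega
    · have := (hC q hq p hp).2.2
      simp only [Fin.lt_def] at this ⊢
      omega
    · exact y3 p hp q hq

lemma isNC_single {s : Fin n × Fin n} (h : s.1 < s.2) : IsNCMatching n {s} := by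
  refine ⟨?_, ?_, ?_⟩
  · intro p hp; rw [Finset.mem_singleton] at hp; rwa [hp]
  · intro p hp q hq hne
    rw [Finset.mem_singleton] at hp hq
    exact absurd (hp.trans hq.symm) hne
  · intro p hp q hq
    rw [Finset.mem_singleton] at hp hq
    subst hp; subst hq
    simp only [Fin.lt_def]
    omega

lemma rev_emb {c : ℕ} (h : c + m ≤ n) (hcen : c + m + c = n) (a : Fin m) :
    (emb c h a).rev = emb c h a.rev := by
  have := a.2
  simp [Fin.ext_iff, Fin.val_rev, emb]
  omega

lemma sym_reflP_push {c : ℕ} (h : c + m ≤ n) (hcen : c + m + c = n)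
    {R : Finset (Fin m × Fin m)} (hR : IsSymmetricMatching m R) :
    ∀ p ∈ push c h R, (p.2.rev, p.1.rev) ∈ push c h R := by
  intro p hp
  rw [push, Finset.mem_image] at hp
  obtain ⟨q, hq, rfl⟩ := hp
  have := hR q hq
  rw [push, Finset.mem_image]
  exact ⟨(q.2.rev, q.1.rev), this, by simp [rev_emb h hcen]⟩

lemma sym_pull {c : ℕ} (h : c + m ≤ n) (hcen : c + m + c = n)
    {P : Finset (Fin n × Fin n)} (hP : IsSymmetricMatching n P) :
    IsSymmetricMatching m (pull c h P) := by
  intro q hq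
  rw [mem_pull] at hq ⊢
  have := hP _ hq
  simpa [rev_emb h hcen] using this


open scoped Classical in
noncomputable def MF (m : ℕ) : Finset (Finset (Fin m × Fin m)) :=
  Finset.univ.filter (fun P => IsNCMatching m P)

open scoped Classical in
noncomputable def SF (m : ℕ) : Finset (Finset (Fin m × Fin m)) :=
  Finset.univ.filter (fun P => IsNCMatching m P ∧ IsSymmetricMatching m P)

lemma mem_MF {P : Finset (Fin m × Fin m)} : P ∈ MF m ↔ IsNCMatching m P := by
  simp [MF]

lemma mem_SF {P : Finset (Fin m × Fin m)} :
    P ∈ SF m ↔ IsNCMatching m P ∧ IsSymmetricMatching m P := by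
  simp [SF]

lemma motzkin_eq (m : ℕ) : motzkin m = (MF m).card := by
  rw [motzkin, ← Set.ncard_coe_finset]
  congr 1
  ext P
  simp [MF]

lemma sym_eq (m : ℕ) : symMatchings m = (SF m).card := by
  rw [symMatchings, ← Set.ncard_coe_finset]
  congr 1
  ext P
  simp [SF]

lemma card_AF {n : ℕ} (hn : 2 ≤ n) :
    ((SF n).filter (fun P => ∀ p ∈ P, (p.1 : ℕ) ≠ 0)).card = (SF (n-2)).card := by
  classical
  have h : 1 + (n-2) ≤ n := by omega
  have hcen : 1 + (n-2) + 1 = n := by omega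
  apply Finset.card_bij' (fun P _ => pull 1 h P) (fun R _ => push 1 h R)
  · intro P hP
    rw [Finset.mem_filter, mem_SF] at hP
    rw [mem_SF]
    exact ⟨isNC_pull h hP.1.1, sym_pull h hcen hP.1.2⟩
  · intro R hR
    rw [mem_SF] at hR
    rw [Finset.mem_filter, mem_SF]
    refine ⟨⟨isNC_push h hR.1, sym_reflP_push h hcen hR.2⟩, ?_⟩
    intro p hp
    have := push_range hp
    omega
  · intro P hP
    rw [Finset.mem_filter, mem_SF] at hP
    obtain ⟨⟨hNC, hSym⟩, h0⟩ := hP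
    have supp : ∀ p ∈ P, 1 ≤ (p.1 : ℕ) ∧ (p.1 : ℕ) < n - 1 ∧ 1 ≤ (p.2 : ℕ) ∧ (p.2 : ℕ) < n - 1 := by
      intro p hp
      have h1 := h0 p hp
      have hlt : (p.1 : ℕ) < (p.2 : ℕ) := hNC.1 p hp
      have h2 : (p.2 : ℕ) ≠ n - 1 := by
        intro he
        have := h0 _ (hSym p hp)
        simp only [Fin.val_rev] at this
        omega
      have := p.2.2
      omega
    ext p
    rw [mem_push_pull]
    constructor
    · exact fun hp => hp.1
    · intro hp
      have := supp p hp
      exact ⟨hp, by omega⟩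
  · intro R _
    exact pull_push



lemma card_BF {n : ℕ} (hn : 2 ≤ n) :
    ((SF n).filter (fun P => ∃ p ∈ P, (p.1 : ℕ) = 0 ∧ (p.2 : ℕ) = n-1)).card
      = (SF (n-2)).card := by
  classical
  have h : 1 + (n-2) ≤ n := by omega
  have hcen : 1 + (n-2) + 1 = n := by omega
  set s₀ : Fin n × Fin n := (⟨0, by omega⟩, ⟨n-1, by omega⟩) with hs₀
  apply Finset.card_bij' (fun P _ => pull 1 h P)
    (fun R _ => insert s₀ (push 1 h R))
  · intro P hP
    rw [Finset.mem_filter, mem_SF] at hP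
    rw [mem_SF]
    exact ⟨isNC_pull h hP.1.1, sym_pull h hcen hP.1.2⟩
  · intro R hR
    rw [mem_SF] at hR
    rw [Finset.mem_filter, mem_SF]
    have hins : insert s₀ (push 1 h R) = {s₀} ∪ push 1 h R := by
      rw [Finset.insert_eq]
    refine ⟨⟨?_, ?_⟩, s₀, by simp, rfl, rfl⟩
    · rw [hins]
      refine isNC_union (isNC_single ?_) (isNC_push h hR.1) ?_
      · simp [hs₀, Fin.lt_def]; omega
      · intro p hp q hq
        rw [Finset.mem_singleton] at hp
        subst hp
        have := push_range hq
        simp only [hs₀]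
        omega
    · intro p hp
      rw [Finset.mem_insert] at hp ⊢
      rcases hp with rfl | hp
      · left
        simp [hs₀, Prod.ext_iff, Fin.ext_iff, Fin.val_rev]
        omega
      · right
        exact sym_reflP_push h hcen hR.2 p hp
  · intro P hP
    rw [Finset.mem_filter, mem_SF] at hP
    obtain ⟨⟨hNC, hSym⟩, p₀, hp₀, e1, e2⟩ := hP
    have hp₀s : p₀ = s₀ := by
      simp [hs₀, Prod.ext_iff, Fin.ext_iff, e1, e2]
    subst hp₀s
    have supp : ∀ p ∈ P, p ≠ s₀ →
        1 ≤ (p.1 : ℕ) ∧ (p.1 : ℕ) < n - 1 ∧ 1 ≤ (p.2 : ℕ) ∧ (p.2 : ℕ) < n - 1 := by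
      intro p hp hne
      have hd := hNC.2.1 p hp s₀ hp₀ hne
      have hlt : (p.1 : ℕ) < (p.2 : ℕ) := hNC.1 p hp
      simp only [Ne, Prod.ext_iff, Fin.ext_iff, hs₀] at hd
      have := p.2.2
      omega
    ext p
    rw [Finset.mem_insert, mem_push_pull]
    constructor
    · rintro (rfl | hp)
      exacts [hp₀, hp.1]
    · intro hp
      by_cases hps : p = s₀
      · exact Or.inl hps
      · right
        have := supp p hp hps
        exact ⟨hp, by omega⟩
  · intro R _
    have : pull 1 h (insert s₀ (push 1 h R)) = pull 1 h (push 1 h R) := by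
      ext q
      rw [mem_pull, mem_pull, Finset.mem_insert]
      have : (emb 1 h q.1, emb 1 h q.2) ≠ s₀ := by
        simp [hs₀, Prod.ext_iff, Fin.ext_iff, emb]
      tauto
    rw [this, pull_push]

lemma card_CF {n i : ℕ} (h2i : 2 ≤ i) (hin : 2 * i ≤ n) :
    ((SF n).filter (fun P => ∃ p ∈ P, (p.1 : ℕ) = 0 ∧ (p.2 : ℕ) = i - 1)).card
      = ((MF (i-2)) ×ˢ (SF (n - 2*i))).card := by
  classical
  have h₁ : 1 + (i-2) ≤ n := by omega
  have h₂ : i + (n - 2*i) ≤ n := by omega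
  have hcen₂ : i + (n - 2*i) + i = n := by omega
  set s₁ : Fin n × Fin n := (⟨0, by omega⟩, ⟨i-1, by omega⟩) with hs₁
  set s₂ : Fin n × Fin n := (⟨n-i, by omega⟩, ⟨n-1, by omega⟩) with hs₂
  have hrs₁ : (s₁.2.rev, s₁.1.rev) = s₂ := by
    simp [hs₁, hs₂, Prod.ext_iff, Fin.ext_iff, Fin.val_rev]
    omega
  have hrs₂ : (s₂.2.rev, s₂.1.rev) = s₁ := by
    simp [hs₁, hs₂, Prod.ext_iff, Fin.ext_iff, Fin.val_rev]
    omega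
  set Φ : Finset (Fin (i-2) × Fin (i-2)) → Finset (Fin (n-2*i) × Fin (n-2*i)) →
      Finset (Fin n × Fin n) := fun Q R =>
    (((({s₁} ∪ {s₂}) ∪ push 1 h₁ Q) ∪ reflP (push 1 h₁ Q)) ∪ push i h₂ R) with hΦ
  have memΦ : ∀ Q R (p : Fin n × Fin n), p ∈ Φ Q R ↔
      p = s₁ ∨ p = s₂ ∨ p ∈ push 1 h₁ Q ∨ p ∈ reflP (push 1 h₁ Q) ∨ p ∈ push i h₂ R := by
    intro Q R p
    simp [hΦ, Finset.mem_union, Finset.mem_singleton, or_assoc]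
  have rangeL : ∀ (Q : Finset (Fin (i-2) × Fin (i-2))), ∀ p ∈ push 1 h₁ Q,
      1 ≤ (p.1:ℕ) ∧ (p.1:ℕ) ≤ i-2 ∧ 1 ≤ (p.2:ℕ) ∧ (p.2:ℕ) ≤ i-2 := by
    intro Q p hp; have := push_range hp; omega
  have rangeRr : ∀ (Q : Finset (Fin (i-2) × Fin (i-2))), ∀ p ∈ reflP (push 1 h₁ Q),
      n-i+1 ≤ (p.1:ℕ) ∧ (p.1:ℕ) ≤ n-2 ∧ n-i+1 ≤ (p.2:ℕ) ∧ (p.2:ℕ) ≤ n-2 := by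
    intro Q p hp
    have hrr := push_range (mem_reflP.1 hp)
    simp only [Fin.val_rev] at hrr
    have := p.1.2; have := p.2.2
    omega
  have rangeM : ∀ (R : Finset (Fin (n-2*i) × Fin (n-2*i))), ∀ p ∈ push i h₂ R,
      i ≤ (p.1:ℕ) ∧ (p.1:ℕ) ≤ n-i-1 ∧ i ≤ (p.2:ℕ) ∧ (p.2:ℕ) ≤ n-i-1 := by
    intro R p hp; have := push_range hp; omega
  have es₁1 : (s₁.1 : ℕ) = 0 := rfl
  have es₁2 : (s₁.2 : ℕ) = i - 1 := rfl
  have es₂1 : (s₂.1 : ℕ) = n - i := rfl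
  have es₂2 : (s₂.2 : ℕ) = n - 1 := rfl
  apply Finset.card_bij' (fun P _ => (pull 1 h₁ P, pull i h₂ P))
    (fun QR _ => Φ QR.1 QR.2)
  · -- forward well-defined
    intro P hP
    rw [Finset.mem_filter, mem_SF] at hP
    rw [Finset.mem_product, mem_MF, mem_SF]
    exact ⟨isNC_pull h₁ hP.1.1, isNC_pull h₂ hP.1.1, sym_pull h₂ hcen₂ hP.1.2⟩
  · -- backward well-defined
    rintro ⟨Q, R⟩ hQR
    rw [Finset.mem_product, mem_MF, mem_SF] at hQR
    obtain ⟨hQ, hR, hRsym⟩ := hQR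
    rw [Finset.mem_filter, mem_SF]
    have nc1 : IsNCMatching n ({s₁} ∪ {s₂}) := by
      refine isNC_union (isNC_single ?_) (isNC_single ?_) ?_
      · simp only [Fin.lt_def, hs₁]; omega
      · simp only [Fin.lt_def, hs₂]; omega
      · intro p hp q hq
        rw [Finset.mem_singleton] at hp hq
        subst hp; subst hq
        simp only [es₁1, es₁2, es₂1, es₂2]
        omega
    have nc2 : IsNCMatching n (({s₁} ∪ {s₂}) ∪ push 1 h₁ Q) := by
      refine isNC_union nc1 (isNC_push h₁ hQ) ?_
      intro p hp q hq
      have hq' := rangeL Q q hq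
      rcases Finset.mem_union.1 hp with hp | hp <;> rw [Finset.mem_singleton] at hp <;>
        subst hp
      · simp only [es₁1, es₁2]; omega
      · simp only [es₂1, es₂2]; omega
    have nc3 : IsNCMatching n ((({s₁} ∪ {s₂}) ∪ push 1 h₁ Q) ∪ reflP (push 1 h₁ Q)) := by
      refine isNC_union nc2 (isNC_reflP (isNC_push h₁ hQ)) ?_
      intro p hp q hq
      have hq' := rangeRr Q q hq
      rcases Finset.mem_union.1 hp with hp | hp
      · rcases Finset.mem_union.1 hp with hp | hp <;> rw [Finset.mem_singleton] at hp <;>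
          subst hp
        · simp only [es₁1, es₁2]; omega
        · simp only [es₂1, es₂2]; omega
      · have hp' := rangeL Q p hp
        omega
    have nc4 : IsNCMatching n (Φ Q R) := by
      rw [hΦ]
      refine isNC_union nc3 (isNC_push h₂ hR) ?_
      intro p hp q hq
      have hq' := rangeM R q hq
      rcases Finset.mem_union.1 hp with hp | hp
      · rcases Finset.mem_union.1 hp with hp | hp
        · rcases Finset.mem_union.1 hp with hp | hp <;> rw [Finset.mem_singleton] at hp <;>
            subst hp
          · simp only [es₁1, es₁2]; omega
          · simp only [es₂1, es₂2]; omega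
        · have hp' := rangeL Q p hp
          omega
      · have hp' := rangeRr Q p hp
        omega
    refine ⟨⟨nc4, ?_⟩, s₁, by rw [memΦ]; exact Or.inl rfl, es₁1, es₁2⟩
    intro p hp
    rw [memΦ] at hp
    rw [memΦ]
    rcases hp with rfl | rfl | hp | hp | hp
    · exact Or.inr (Or.inl hrs₁)
    · exact Or.inl hrs₂
    · refine Or.inr (Or.inr (Or.inr (Or.inl ?_)))
      rw [mem_reflP]
      simpa [Fin.rev_rev] using hp
    · exact Or.inr (Or.inr (Or.inl (mem_reflP.1 hp)))
    · exact Or.inr (Or.inr (Or.inr (Or.inr (sym_reflP_push h₂ hcen₂ hRsym p hp))))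
  · -- left inverse
    intro P hP
    rw [Finset.mem_filter, mem_SF] at hP
    obtain ⟨⟨hNC, hSym⟩, p₀, hp₀, e1, e2⟩ := hP
    have hp₀s : p₀ = s₁ := by
      simp [hs₁, Prod.ext_iff, Fin.ext_iff, e1, e2]
    subst hp₀s
    have hs₂P : s₂ ∈ P := by
      have := hSym s₁ hp₀
      rwa [hrs₁] at this
    have supp : ∀ p ∈ P, p ≠ s₁ → p ≠ s₂ →
        (1 ≤ (p.1:ℕ) ∧ (p.2:ℕ) ≤ i-2) ∨ (i ≤ (p.1:ℕ) ∧ (p.2:ℕ) ≤ n-i-1) ∨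
        (n-i+1 ≤ (p.1:ℕ) ∧ (p.2:ℕ) ≤ n-2) := by
      intro p hp hne₁ hne₂
      have hd₁ := hNC.2.1 p hp s₁ hp₀ hne₁
      have hd₂ := hNC.2.1 p hp s₂ hs₂P hne₂
      have hc₁ := hNC.2.2 s₁ hp₀ p hp
      have hc₂ := hNC.2.2 p hp s₂ hs₂P
      have hlt : (p.1:ℕ) < (p.2:ℕ) := hNC.1 p hp
      simp only [Ne, Prod.ext_iff, Fin.ext_iff, Fin.lt_def, es₁1, es₁2, es₂1, es₂2] at hd₁ hd₂ hc₁ hc₂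
      have := p.1.2; have := p.2.2
      omega
    have hlt' : ∀ p ∈ P, (p.1:ℕ) < (p.2:ℕ) := fun p hp => hNC.1 p hp
    ext p
    rw [memΦ]
    constructor
    · rintro (rfl | rfl | hp | hp | hp)
      · exact hp₀
      · exact hs₂P
      · exact (mem_push_pull.1 hp).1
      · have h1 := (mem_push_pull.1 (mem_reflP.1 hp)).1
        have := hSym _ h1
        simpa [Fin.rev_rev] using this
      · exact (mem_push_pull.1 hp).1
    · intro hp
      by_cases he₁ : p = s₁
      · exact Or.inl he₁
      by_cases he₂ : p = s₂
      · exact Or.inr (Or.inl he₂)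
      rcases supp p hp he₁ he₂ with hr | hr | hr
      · refine Or.inr (Or.inr (Or.inl ?_))
        rw [mem_push_pull]
        have := hlt' p hp
        exact ⟨hp, by omega⟩
      · refine Or.inr (Or.inr (Or.inr (Or.inr ?_)))
        rw [mem_push_pull]
        have := hlt' p hp
        exact ⟨hp, by omega⟩
      · refine Or.inr (Or.inr (Or.inr (Or.inl ?_)))
        rw [mem_reflP, mem_push_pull]
        have hrp : (p.2.rev, p.1.rev) ∈ P := hSym p hp
        refine ⟨hrp, ?_⟩
        have := hlt' p hp
        simp only [Fin.val_rev]
        have := p.1.2; have := p.2.2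
        omega
  · -- right inverse
    rintro ⟨Q, R⟩ hQR
    have excl₁ : pull 1 h₁ (Φ Q R) = pull 1 h₁ (push 1 h₁ Q) := by
      ext q
      rw [mem_pull, mem_pull, memΦ]
      have b1 := q.1.2; have b2 := q.2.2
      have ev1 : ((emb 1 h₁ q.1 : Fin n) : ℕ) = 1 + (q.1 : ℕ) := rfl
      have ev2 : ((emb 1 h₁ q.2 : Fin n) : ℕ) = 1 + (q.2 : ℕ) := rfl
      constructor
      · rintro (he | he | hm | hm | hm)
        · exfalso
          have : ((emb 1 h₁ q.1 : Fin n) : ℕ) = (s₁.1 : ℕ) := congrArg (fun x : Fin n × Fin n => (x.1 : ℕ)) he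
          rw [ev1, es₁1] at this
          omega
        · exfalso
          have : ((emb 1 h₁ q.1 : Fin n) : ℕ) = (s₂.1 : ℕ) := congrArg (fun x : Fin n × Fin n => (x.1 : ℕ)) he
          rw [ev1, es₂1] at this
          omega
        · exact hm
        · exfalso
          have := rangeRr Q _ hm
          rw [ev1, ev2] at this
          omega
        · exfalso
          have := rangeM R _ hm
          rw [ev1, ev2] at this
          omega
      · intro hm
        exact Or.inr (Or.inr (Or.inl hm))
    have excl₂ : pull i h₂ (Φ Q R) = pull i h₂ (push i h₂ R) := by
      ext q
      rw [mem_pull, mem_pull, memΦ]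
      have b1 := q.1.2; have b2 := q.2.2
      have ev1 : ((emb i h₂ q.1 : Fin n) : ℕ) = i + (q.1 : ℕ) := rfl
      have ev2 : ((emb i h₂ q.2 : Fin n) : ℕ) = i + (q.2 : ℕ) := rfl
      constructor
      · rintro (he | he | hm | hm | hm)
        · exfalso
          have : ((emb i h₂ q.1 : Fin n) : ℕ) = (s₁.1 : ℕ) := congrArg (fun x : Fin n × Fin n => (x.1 : ℕ)) he
          rw [ev1, es₁1] at this
          omega
        · exfalso
          have : ((emb i h₂ q.1 : Fin n) : ℕ) = (s₂.1 : ℕ) := congrArg (fun x : Fin n × Fin n => (x.1 : ℕ)) he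
          rw [ev1, es₂1] at this
          omega
        · exfalso
          have := rangeL Q _ hm
          rw [ev1, ev2] at this
          omega
        · exfalso
          have := rangeRr Q _ hm
          rw [ev1, ev2] at this
          omega
        · exact hm
      · intro hm
        exact Or.inr (Or.inr (Or.inr (Or.inr hm)))
    simp only [excl₁, excl₂, pull_push]

lemma partner_unique {n : ℕ} {P : Finset (Fin n × Fin n)} (hNC : IsNCMatching n P)
    {p q : Fin n × Fin n} (hp : p ∈ P) (hq : q ∈ P) (h1 : (p.1 : ℕ) = (q.1 : ℕ)) : p = q := by
  by_contra hne
  exact absurd (Fin.ext h1) (hNC.2.1 p hp q hq hne).1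

theorem main (n : ℕ) (hn : 2 ≤ n) :
    symMatchings n = 2 * symMatchings (n - 2) +
      ∑ i ∈ Finset.Icc 2 (n / 2), motzkin (i - 2) * symMatchings (n - 2 * i) := by
  classical
  have hsplit := Finset.card_filter_add_card_filter_not
    (s := SF n) (p := fun P => ∀ p ∈ P, (p.1 : ℕ) ≠ 0)
  set AF := (SF n).filter (fun P => ∀ p ∈ P, (p.1 : ℕ) ≠ 0) with hAF
  set DF := (SF n).filter (fun P => ¬ ∀ p ∈ P, (p.1 : ℕ) ≠ 0) with hDF
  set BF := (SF n).filter (fun P => ∃ p ∈ P, (p.1 : ℕ) = 0 ∧ (p.2 : ℕ) = n - 1) with hBF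
  set CF : ℕ → Finset (Finset (Fin n × Fin n)) :=
    fun i => (SF n).filter (fun P => ∃ p ∈ P, (p.1 : ℕ) = 0 ∧ (p.2 : ℕ) = i - 1) with hCF
  have hD : DF = BF ∪ (Finset.Icc 2 (n / 2)).biUnion CF := by
    ext P
    simp only [hDF, hBF, hCF, Finset.mem_filter, Finset.mem_union, Finset.mem_biUnion,
      Finset.mem_Icc, not_forall]
    constructor
    · rintro ⟨hPS, p₀, hp₀, he0⟩
      simp only [not_not] at he0
      have hSF := hPS
      rw [mem_SF] at hSF
      obtain ⟨hNC, hSym⟩ := hSF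
      have hlt : (p₀.1 : ℕ) < (p₀.2 : ℕ) := hNC.1 p₀ hp₀
      by_cases hj : (p₀.2 : ℕ) = n - 1
      · exact Or.inl ⟨hPS, p₀, hp₀, he0, hj⟩
      · right
        have hqP : (p₀.2.rev, p₀.1.rev) ∈ P := hSym p₀ hp₀
        have hq1 : ((p₀.2.rev : Fin n) : ℕ) = n - 1 - (p₀.2 : ℕ) := by
          rw [Fin.val_rev]; omega
        have hq2 : ((p₀.1.rev : Fin n) : ℕ) = n - 1 := by
          rw [Fin.val_rev, he0]
        have hb := p₀.2.2
        have hne : p₀ ≠ (p₀.2.rev, p₀.1.rev) := by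
          intro he
          have h22 := congrArg (fun x : Fin n × Fin n => (x.2 : ℕ)) he
          simp only at h22
          omega
        have hd := hNC.2.1 p₀ hp₀ _ hqP hne
        have hc := hNC.2.2 p₀ hp₀ _ hqP
        simp only [Ne, Fin.ext_iff, Fin.lt_def] at hd hc
        refine ⟨(p₀.2 : ℕ) + 1, ⟨by omega, by omega⟩, hPS, p₀, hp₀, he0, by omega⟩
    · rintro (⟨hPS, p₀, hp₀, he0, _⟩ | ⟨i, _, hPS, p₀, hp₀, he0, _⟩) <;>
        exact ⟨hPS, p₀, hp₀, by simp [he0]⟩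
  have hdisjBC : Disjoint BF ((Finset.Icc 2 (n / 2)).biUnion CF) := by
    rw [Finset.disjoint_left]
    intro P hPB hPC
    simp only [hBF, hCF, Finset.mem_filter, Finset.mem_biUnion, Finset.mem_Icc] at hPB hPC
    obtain ⟨hPS, p, hp, e1, e2⟩ := hPB
    obtain ⟨i, ⟨hi2, hin⟩, _, p', hp', f1, f2⟩ := hPC
    rw [mem_SF] at hPS
    have := partner_unique hPS.1 hp hp' (by omega)
    subst this
    have h2n : 2 * (n / 2) ≤ n := Nat.mul_div_le n 2
    omega
  have hdisjC : ∀ i ∈ Finset.Icc 2 (n / 2), ∀ j ∈ Finset.Icc 2 (n / 2), i ≠ j →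
      Disjoint (CF i) (CF j) := by
    intro i hi j hj hij
    rw [Finset.disjoint_left]
    intro P hPi hPj
    simp only [hCF, Finset.mem_filter] at hPi hPj
    obtain ⟨hPS, p, hp, e1, e2⟩ := hPi
    obtain ⟨_, p', hp', f1, f2⟩ := hPj
    rw [mem_SF] at hPS
    have := partner_unique hPS.1 hp hp' (by omega)
    subst this
    simp only [Finset.mem_Icc] at hi hj
    omega
  have hcardD : DF.card = BF.card + ∑ i ∈ Finset.Icc 2 (n / 2), (CF i).card := by
    rw [hD, Finset.card_union_of_disjoint hdisjBC, Finset.card_biUnion hdisjC]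
  have hA : AF.card = (SF (n - 2)).card := card_AF hn
  have hB : BF.card = (SF (n - 2)).card := card_BF hn
  have hC : ∀ i ∈ Finset.Icc 2 (n / 2),
      (CF i).card = motzkin (i - 2) * symMatchings (n - 2 * i) := by
    intro i hi
    simp only [Finset.mem_Icc] at hi
    have h2n : 2 * (n / 2) ≤ n := Nat.mul_div_le n 2
    rw [hCF, card_CF hi.1 (by omega), Finset.card_product, ← motzkin_eq, ← sym_eq]
  rw [sym_eq, ← hsplit, hcardD, hB, hA, Finset.sum_congr rfl hC, ← sym_eq]
  ring

end NCAux


theorem symMatchings_recurrence (n : ℕ) (hn : 2 ≤ n) :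
    symMatchings n = 2 * symMatchings (n - 2) +
      ∑ i ∈ Finset.Icc 2 (n / 2), motzkin (i - 2) * symMatchings (n - 2 * i) := NCAux.main n hn
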